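/- Let V = ℝ^7 with standard basis e_1,…,e_7 and dual basis f_1,…,f_7, and let T be the alternating trilinear form with trivector t = f_{124} + f_{235} + f_{346} + f_{457} + f_{561} + f_{672} + f_{713} (where f_{ijk} = f_i ∧ f_j ∧ f_k). Then T has no singular lines: for any linearly independent a, b ∈ ℝ^7 there exists x with T(a,b,x) ≠ 0. -/

import Mathlib

noncomputable def tri (i j k : Fin 7) : AlternatingMap ℝ (Fin 7 → ℝ) ℝ (Fin 3) :=
  Matrix.detRowAlternating.compLinearMap (LinearMap.funLeft ℝ ℝ ![i, j, k])

lemma tri_apply (i j k : Fin 7) (u v w : Fin 7 → ℝ) :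
    tri i j k ![u, v, w] =
      u i * (v j * w k - v k * w j) - u j * (v i * w k - v k * w i)
        + u k * (v i * w j - v j * w i) := by
  have h : tri i j k ![u, v, w] =
      Matrix.det (Matrix.of fun s t => ![u, v, w] s (![i, j, k] t)) := rfl
  rw [h, Matrix.det_fin_three]
  simp [Matrix.of_apply]
  ring

noncomputable def T0 : AlternatingMap ℝ (Fin 7 → ℝ) ℝ (Fin 3) :=
  tri 0 1 3 + tri 1 2 4 + tri 2 3 5 + tri 3 4 6 + tri 0 4 5 + tri 1 5 6 + tri 0 2 6

lemma T0_apply (u v w : Fin 7 → ℝ) :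
    T0 ![u, v, w] = tri 0 1 3 ![u,v,w] + tri 1 2 4 ![u,v,w] + tri 2 3 5 ![u,v,w]
      + tri 3 4 6 ![u,v,w] + tri 0 4 5 ![u,v,w] + tri 1 5 6 ![u,v,w] + tri 0 2 6 ![u,v,w] := by
  simp [T0]

lemma swap01 (f : AlternatingMap ℝ (Fin 7 → ℝ) ℝ (Fin 3)) (u v w : Fin 7 → ℝ) :
    f ![u, v, w] = - f ![v, u, w] := by
  have h := f.map_swap ![v, u, w] (show (0 : Fin 3) ≠ 1 by decide)
  have e : (![v, u, w] ∘ Equiv.swap (0 : Fin 3) 1) = ![u, v, w] := by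
    funext s; fin_cases s <;> simp [Equiv.swap_apply_def]
  rw [e] at h; exact h

lemma swap12 (f : AlternatingMap ℝ (Fin 7 → ℝ) ℝ (Fin 3)) (u v w : Fin 7 → ℝ) :
    f ![u, v, w] = - f ![u, w, v] := by
  have h := f.map_swap ![u, w, v] (show (1 : Fin 3) ≠ 2 by decide)
  have e : (![u, w, v] ∘ Equiv.swap (1 : Fin 3) 2) = ![u, v, w] := by
    funext s; fin_cases s <;> simp [Equiv.swap_apply_def]
  rw [e] at h; exact h

lemma swap02 (f : AlternatingMap ℝ (Fin 7 → ℝ) ℝ (Fin 3)) (u v w : Fin 7 → ℝ) :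
    f ![u, v, w] = - f ![w, v, u] := by
  have h := f.map_swap ![w, v, u] (show (0 : Fin 3) ≠ 2 by decide)
  have e : (![w, v, u] ∘ Equiv.swap (0 : Fin 3) 2) = ![u, v, w] := by
    funext s; fin_cases s <;> simp [Equiv.swap_apply_def]
  rw [e] at h; exact h

set_option maxHeartbeats 2000000 in
lemma hT0 : ∀ i j k : Fin 7, i < j → j < k →
    T0 ![Pi.single i 1, Pi.single j 1, Pi.single k 1] =
      if ((i : ℕ), (j : ℕ), (k : ℕ)) ∈
          [((0:ℕ), (1:ℕ), (3:ℕ)), (1, 2, 4), (2, 3, 5), (3, 4, 6),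
            (0, 4, 5), (1, 5, 6), (0, 2, 6)] then 1 else 0 := by
  intro i j k hij hjk
  rw [T0_apply]
  simp only [tri_apply, Pi.single_apply]
  fin_cases i <;> fin_cases j <;> fin_cases k <;> simp_all

lemma ext_from_sorted (f g : AlternatingMap ℝ (Fin 7 → ℝ) ℝ (Fin 3))
    (h : ∀ i j k : Fin 7, i < j → j < k →
      f ![Pi.single i 1, Pi.single j 1, Pi.single k 1] =
        g ![Pi.single i 1, Pi.single j 1, Pi.single k 1]) : f = g := by
  apply Module.Basis.ext_alternating (Pi.basisFun ℝ (Fin 7))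
  intro v hv
  have key : ∀ i j k : Fin 7, i ≠ j → i ≠ k → j ≠ k →
      f ![Pi.single i 1, Pi.single j 1, Pi.single k 1] =
        g ![Pi.single i 1, Pi.single j 1, Pi.single k 1] := by
    intro i j k hij hik hjk
    rcases lt_trichotomy i j with h1 | h1 | h1
    · rcases lt_trichotomy j k with h2 | h2 | h2
      · exact h i j k h1 h2
      · exact absurd h2 hjk
      · rcases lt_trichotomy i k with h3 | h3 | h3
        · rw [swap12 f, swap12 g, h i k j h3 h2]
        · exact absurd h3 hik
        · rw [swap12 f, swap01 f, swap12 g, swap01 g, h k i j h3 h1]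
    · exact absurd h1 hij
    · rcases lt_trichotomy i k with h2 | h2 | h2
      · rw [swap01 f, swap01 g, h j i k h1 h2]
      · exact absurd h2 hik
      · rcases lt_trichotomy j k with h3 | h3 | h3
        · rw [swap02 f, swap01 f, swap02 g, swap01 g, h j k i h3 h2]
        · exact absurd h3 hjk
        · rw [swap02 f, swap02 g, h k j i h3 h1]
  have e : (fun s => (Pi.basisFun ℝ (Fin 7)) (v s)) =
      ![Pi.single (v 0) 1, Pi.single (v 1) 1, Pi.single (v 2) 1] := by
    funext s; fin_cases s <;> simp
  rw [e]
  exact key (v 0) (v 1) (v 2) (fun hh => absurd (hv hh) (by decide))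
    (fun hh => absurd (hv hh) (by decide)) (fun hh => absurd (hv hh) (by decide))

set_option maxHeartbeats 2000000 in
/-- The real alternating trilinear form on `ℝ⁷` with trivector
`t = f₁₂₄ + f₂₃₅ + f₃₄₆ + f₄₅₇ + f₅₆₁ + f₆₇₂ + f₇₁₃` has no singular lines.
(Indices below are 0-based; the sorted triples with sign `+1` are
`(0,1,3),(1,2,4),(2,3,5),(3,4,6),(0,4,5),(1,5,6),(0,2,6)`.) -/
theorem stmt_4 (T : AlternatingMap ℝ (Fin 7 → ℝ) ℝ (Fin 3))
    (hT : ∀ i j k : Fin 7, i < j → j < k →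
      T ![Pi.single i 1, Pi.single j 1, Pi.single k 1] =
        if ((i : ℕ), (j : ℕ), (k : ℕ)) ∈
            [((0:ℕ), (1:ℕ), (3:ℕ)), (1, 2, 4), (2, 3, 5), (3, 4, 6),
              (0, 4, 5), (1, 5, 6), (0, 2, 6)] then 1 else 0) :
    ∀ a b : Fin 7 → ℝ, LinearIndependent ℝ ![a, b] →
      ∃ x : Fin 7 → ℝ, T ![a, b, x] ≠ 0 := by
  have hEq : T = T0 :=
    ext_from_sorted T T0 (fun i j k hij hjk => by
      rw [hT i j k hij hjk, hT0 i j k hij hjk])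
  intro a b hab
  by_contra hc
  push_neg at hc
  have hm : ∀ x, T0 ![a, b, x] = 0 := fun x => hEq ▸ hc x
  have ev : ∀ m : Fin 7, T0 ![a, b, Pi.single m 1] = 0 := fun m => hm _
  have E0 : a 1 * b 3 + a 2 * b 6 - a 3 * b 1 + a 4 * b 5 - a 5 * b 4 - a 6 * b 2 = 0 := by
    have h0 := ev 0; rw [T0_apply] at h0
    simp only [tri_apply, Pi.single_apply, Fin.reduceEq, reduceIte] at h0
    linear_combination h0
  have E1 : -(a 0 * b 3) + a 2 * b 4 + a 3 * b 0 - a 4 * b 2 + a 5 * b 6 - a 6 * b 5 = 0 := by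
    have h0 := ev 1; rw [T0_apply] at h0
    simp only [tri_apply, Pi.single_apply, Fin.reduceEq, reduceIte] at h0
    linear_combination h0
  have E2 : -(a 0 * b 6) - a 1 * b 4 + a 3 * b 5 + a 4 * b 1 - a 5 * b 3 + a 6 * b 0 = 0 := by
    have h0 := ev 2; rw [T0_apply] at h0
    simp only [tri_apply, Pi.single_apply, Fin.reduceEq, reduceIte] at h0
    linear_combination h0
  have E3 : a 0 * b 1 - a 1 * b 0 - a 2 * b 5 + a 4 * b 6 + a 5 * b 2 - a 6 * b 4 = 0 := by
    have h0 := ev 3; rw [T0_apply] at h0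
    simp only [tri_apply, Pi.single_apply, Fin.reduceEq, reduceIte] at h0
    linear_combination h0
  have E4 : -(a 0 * b 5) + a 1 * b 2 - a 2 * b 1 - a 3 * b 6 + a 5 * b 0 + a 6 * b 3 = 0 := by
    have h0 := ev 4; rw [T0_apply] at h0
    simp only [tri_apply, Pi.single_apply, Fin.reduceEq, reduceIte] at h0
    linear_combination h0
  have E5 : a 0 * b 4 - a 1 * b 6 + a 2 * b 3 - a 3 * b 2 - a 4 * b 0 + a 6 * b 1 = 0 := by
    have h0 := ev 5; rw [T0_apply] at h0
    simp only [tri_apply, Pi.single_apply, Fin.reduceEq, reduceIte] at h0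
    linear_combination h0
  have E6 : a 0 * b 2 + a 1 * b 5 - a 2 * b 0 + a 3 * b 4 - a 4 * b 3 - a 5 * b 1 = 0 := by
    have h0 := ev 6; rw [T0_apply] at h0
    simp only [tri_apply, Pi.single_apply, Fin.reduceEq, reduceIte] at h0
    linear_combination h0
  set B2 : ℝ := b 0^2 + b 1^2 + b 2^2 + b 3^2 + b 4^2 + b 5^2 + b 6^2 with hB2def
  set AB : ℝ := a 0 * b 0 + a 1 * b 1 + a 2 * b 2 + a 3 * b 3 + a 4 * b 4 + a 5 * b 5 + a 6 * b 6 with hABdef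
  have D0 : B2 * a 0 - AB * b 0 = 0 := by
    rw [hB2def, hABdef]
    linear_combination (-(b 3)) * E1 - b 6 * E2 + b 1 * E3 - b 5 * E4 + b 4 * E5 + b 2 * E6
  have D1 : B2 * a 1 - AB * b 1 = 0 := by
    rw [hB2def, hABdef]
    linear_combination b 3 * E0 - b 4 * E2 - b 0 * E3 + b 2 * E4 - b 6 * E5 + b 5 * E6
  have D2 : B2 * a 2 - AB * b 2 = 0 := by
    rw [hB2def, hABdef]
    linear_combination b 6 * E0 + b 4 * E1 - b 5 * E3 - b 1 * E4 + b 3 * E5 - b 0 * E6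
  have D3 : B2 * a 3 - AB * b 3 = 0 := by
    rw [hB2def, hABdef]
    linear_combination (-(b 1)) * E0 + b 0 * E1 + b 5 * E2 - b 6 * E4 - b 2 * E5 + b 4 * E6
  have D4 : B2 * a 4 - AB * b 4 = 0 := by
    rw [hB2def, hABdef]
    linear_combination b 5 * E0 - b 2 * E1 + b 1 * E2 + b 6 * E3 - b 0 * E5 - b 3 * E6
  have D5 : B2 * a 5 - AB * b 5 = 0 := by
    rw [hB2def, hABdef]
    linear_combination (-(b 4)) * E0 + b 6 * E1 - b 3 * E2 + b 2 * E3 + b 0 * E4 - b 1 * E6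
  have D6 : B2 * a 6 - AB * b 6 = 0 := by
    rw [hB2def, hABdef]
    linear_combination (-(b 2)) * E0 - b 5 * E1 + b 0 * E2 - b 4 * E3 + b 3 * E4 + b 1 * E5
  have G0 : B2 * a 0 + -AB * b 0 = 0 := by linarith [D0]
  have G1 : B2 * a 1 + -AB * b 1 = 0 := by linarith [D1]
  have G2 : B2 * a 2 + -AB * b 2 = 0 := by linarith [D2]
  have G3 : B2 * a 3 + -AB * b 3 = 0 := by linarith [D3]
  have G4 : B2 * a 4 + -AB * b 4 = 0 := by linarith [D4]
  have G5 : B2 * a 5 + -AB * b 5 = 0 := by linarith [D5]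
  have G6 : B2 * a 6 + -AB * b 6 = 0 := by linarith [D6]
  rw [LinearIndependent.pair_iff] at hab
  have hzero := hab B2 (-AB) (by
    funext m
    simp only [Pi.add_apply, Pi.smul_apply, smul_eq_mul, Pi.zero_apply]
    fin_cases m <;>
      first | exact G0 | exact G1 | exact G2 | exact G3 | exact G4 | exact G5 | exact G6)
  have hB2 : B2 = 0 := hzero.1
  rw [hB2def] at hB2
  have s0 : b 0 = 0 := sq_eq_zero_iff.mp (by
    linarith [sq_nonneg (b 0), sq_nonneg (b 1), sq_nonneg (b 2), sq_nonneg (b 3), sq_nonneg (b 4), sq_nonneg (b 5), sq_nonneg (b 6)])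
  have s1 : b 1 = 0 := sq_eq_zero_iff.mp (by
    linarith [sq_nonneg (b 0), sq_nonneg (b 1), sq_nonneg (b 2), sq_nonneg (b 3), sq_nonneg (b 4), sq_nonneg (b 5), sq_nonneg (b 6)])
  have s2 : b 2 = 0 := sq_eq_zero_iff.mp (by
    linarith [sq_nonneg (b 0), sq_nonneg (b 1), sq_nonneg (b 2), sq_nonneg (b 3), sq_nonneg (b 4), sq_nonneg (b 5), sq_nonneg (b 6)])
  have s3 : b 3 = 0 := sq_eq_zero_iff.mp (by
    linarith [sq_nonneg (b 0), sq_nonneg (b 1), sq_nonneg (b 2), sq_nonneg (b 3), sq_nonneg (b 4), sq_nonneg (b 5), sq_nonneg (b 6)])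
  have s4 : b 4 = 0 := sq_eq_zero_iff.mp (by
    linarith [sq_nonneg (b 0), sq_nonneg (b 1), sq_nonneg (b 2), sq_nonneg (b 3), sq_nonneg (b 4), sq_nonneg (b 5), sq_nonneg (b 6)])
  have s5 : b 5 = 0 := sq_eq_zero_iff.mp (by
    linarith [sq_nonneg (b 0), sq_nonneg (b 1), sq_nonneg (b 2), sq_nonneg (b 3), sq_nonneg (b 4), sq_nonneg (b 5), sq_nonneg (b 6)])
  have s6 : b 6 = 0 := sq_eq_zero_iff.mp (by
    linarith [sq_nonneg (b 0), sq_nonneg (b 1), sq_nonneg (b 2), sq_nonneg (b 3), sq_nonneg (b 4), sq_nonneg (b 5), sq_nonneg (b 6)])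
  have hb : b = 0 := by
    funext m
    fin_cases m <;>
      first | exact s0 | exact s1 | exact s2 | exact s3 | exact s4 | exact s5 | exact s6
  have := (hab 0 1 (by simp [hb])).2
  norm_num at this
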